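/- arXiv:2301.05677 — 6 statements merged into one kernel-verified Lean document; each statement's English description precedes it below -/
import Mathlib

section
/- Let an auction order book be given with an auction price p_a, auction volume Q_a = min(S(p_a), D(p_a)), and a matching at (p_a, Q_a) with remaining volumes V_B^R, V_S^R. Then V_S^R(p_a) · V_B^R(p_a) = 0, i.e., V_S^R(p_a) = 0 or V_B^R(p_a) = 0. -/
open Function Set

/-- Helper: if `g ≤ f`, `g = f` on `A`, `g = 0` on `B`, and `{pa} ∪ A ∪ B` covers
everything (with `pa ∉ A`, disjointness), then `∑ᶠ g = (∑ᶠ p ∈ A, f p) + g pa`. -/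
lemma matched_finsum_split (pa : ℝ) (f g : ℝ → ℕ) (hf : (Function.support f).Finite)
    (A B : Set ℝ) (hAB : Disjoint (insert pa A) B) (hpaA : pa ∉ A)
    (hU : insert pa A ∪ B = Set.univ)
    (hgA : ∀ p ∈ A, g p = f p) (hgB : ∀ p ∈ B, g p = 0) (hgle : ∀ p, g p ≤ f p) :
    (∑ᶠ p, g p) = (∑ᶠ p ∈ A, f p) + g pa := by
  have hsupp : Function.support g ⊆ Function.support f := fun p hp h0 => by
    have := hgle p
    rw [h0] at this
    exact hp (Nat.le_zero.mp this)
  have hgfin : (Function.support g).Finite := hf.subset hsupp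
  calc ∑ᶠ p, g p = ∑ᶠ p ∈ insert pa A ∪ B, g p := by rw [hU, finsum_mem_univ]
    _ = (∑ᶠ p ∈ insert pa A, g p) + ∑ᶠ p ∈ B, g p :=
        finsum_mem_union' hAB (hgfin.inter_of_right _) (hgfin.inter_of_right _)
    _ = (g pa + ∑ᶠ p ∈ A, g p) + 0 := by
        rw [finsum_mem_insert' g hpaA (hgfin.inter_of_right _),
          finsum_mem_of_eqOn_zero hgB]
    _ = (∑ᶠ p ∈ A, f p) + g pa := by
        rw [finsum_mem_congr rfl hgA]; ring

/-- For an auction order book with auction price `pa`, auction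
volume `Qa = min (S pa) (D pa)`, and a matching at `(pa, Qa)`, the remaining
volumes at the auction price satisfy `V_S^R(pa) · V_B^R(pa) = 0`. -/
theorem remaining_volumes_product_zero
    (VB VS VBM VSM : ℝ → ℕ)
    (hVB : (Function.support VB).Finite)
    (hVS : (Function.support VS).Finite)
    (S D : ℝ → ℕ)
    (hS : ∀ p : ℝ, S p = ∑ᶠ p' ∈ {p' : ℝ | p' ≤ p}, VS p')
    (hD : ∀ p : ℝ, D p = ∑ᶠ p' ∈ {p' : ℝ | p ≤ p'}, VB p')
    (pa : ℝ) (Qa : ℕ)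
    (hmax : ∀ p : ℝ, min (S p) (D p) ≤ min (S pa) (D pa))
    (hQa : Qa = min (S pa) (D pa))
    (hBMle : ∀ p : ℝ, VBM p ≤ VB p)
    (hSMle : ∀ p : ℝ, VSM p ≤ VS p)
    (hBMabove : ∀ p : ℝ, pa < p → VBM p = VB p)
    (hBMbelow : ∀ p : ℝ, p < pa → VBM p = 0)
    (hSMbelow : ∀ p : ℝ, p < pa → VSM p = VS p)
    (hSMabove : ∀ p : ℝ, pa < p → VSM p = 0)
    (hBMsum : (∑ᶠ p : ℝ, VBM p) = Qa)
    (hSMsum : (∑ᶠ p : ℝ, VSM p) = Qa) :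
    (VS pa - VSM pa) * (VB pa - VBM pa) = 0 := by
  -- Sell-side decomposition
  have hSsplit : (∑ᶠ p : ℝ, VSM p) = (∑ᶠ p ∈ {p : ℝ | p < pa}, VS p) + VSM pa := by
    refine matched_finsum_split pa VS VSM hVS {p | p < pa} {p | pa < p} ?_ (by simp) ?_
      (fun p hp => hSMbelow p hp) (fun p hp => hSMabove p hp) hSMle
    · rw [Set.disjoint_left]
      rintro x hx hx'
      rcases hx with rfl | hx
      · exact lt_irrefl x hx'
      · exact absurd (lt_trans hx hx') (lt_irrefl x)
    · ext x
      simp only [Set.mem_union, Set.mem_insert_iff, Set.mem_setOf_eq, Set.mem_univ, iff_true]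
      rcases lt_trichotomy x pa with h | h | h <;> tauto
  have hSpa : S pa = VS pa + ∑ᶠ p ∈ {p : ℝ | p < pa}, VS p := by
    have : {p' : ℝ | p' ≤ pa} = insert pa {p : ℝ | p < pa} := by
      ext x; simp [le_iff_lt_or_eq, or_comm]
    rw [hS, this, finsum_mem_insert' VS (by simp) (hVS.inter_of_right _)]
  -- Buy-side decomposition
  have hBsplit : (∑ᶠ p : ℝ, VBM p) = (∑ᶠ p ∈ {p : ℝ | pa < p}, VB p) + VBM pa := by
    refine matched_finsum_split pa VB VBM hVB {p | pa < p} {p | p < pa} ?_ (by simp) ?_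
      (fun p hp => hBMabove p hp) (fun p hp => hBMbelow p hp) hBMle
    · rw [Set.disjoint_left]
      rintro x hx hx'
      rcases hx with rfl | hx
      · exact lt_irrefl x hx'
      · exact absurd (lt_trans hx' hx) (lt_irrefl x)
    · ext x
      simp only [Set.mem_union, Set.mem_insert_iff, Set.mem_setOf_eq, Set.mem_univ, iff_true]
      rcases lt_trichotomy x pa with h | h | h <;> tauto
  have hDpa : D pa = VB pa + ∑ᶠ p ∈ {p : ℝ | pa < p}, VB p := by
    have : {p' : ℝ | pa ≤ p'} = insert pa {p : ℝ | pa < p} := by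
      ext x; simp [le_iff_lt_or_eq, or_comm, eq_comm]
    rw [hD, this, finsum_mem_insert' VB (by simp) (hVB.inter_of_right _)]
  rw [hSMsum] at hSsplit
  rw [hBMsum] at hBsplit
  rcases le_total (S pa) (D pa) with h | h
  · rw [min_eq_left h] at hQa
    have h1 : VS pa - VSM pa = 0 := by omega
    rw [h1, Nat.zero_mul]
  · rw [min_eq_right h] at hQa
    have h1 : VB pa - VBM pa = 0 := by omega
    rw [h1, Nat.mul_zero]
end

section
/- Let an auction order book be given with an auction price p_a, auction volume Q_a = min(S(p_a), D(p_a)), and a matching at (p_a, Q_a). Set q_B^(0) = V_S^R(p_a) + V_B^M(p_a). Then for every natural number q with 0 ≤ q ≤ q_B^(0) and every price p, min(S(p), D(p) + q) ≤ min(S(p_a), D(p_a) + q); that is, after submitting a buy market order of size at most q_B^(0), the original auction price p_a still maximizes the exchanged volume (zero price impact). Moreover the maximal exchanged volume after the submission equals Q_a + min(V_S^R(p_a), V_B^R(p_a) + q). -/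
/-- Submitting a buy market order of size
`q ≤ q_B^(0) = V_S^R(pa) + V_B^M(pa)` just before the clearing (replacing the
demand `D` by `D + q`) has zero price impact: `pa` still maximizes the
exchanged volume, and the new maximal exchanged volume is
`Qa + min (V_S^R(pa)) (V_B^R(pa) + q)`. -/
theorem buy_order_zero_impact
    (VB VS VBM VSM : ℝ → ℕ)
    (hVB : (Function.support VB).Finite)
    (hVS : (Function.support VS).Finite)
    (S D : ℝ → ℕ)
    (hS : ∀ p : ℝ, S p = ∑ᶠ p' ∈ {p' : ℝ | p' ≤ p}, VS p')
    (hD : ∀ p : ℝ, D p = ∑ᶠ p' ∈ {p' : ℝ | p ≤ p'}, VB p')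
    (pa : ℝ) (Qa : ℕ)
    (hmax : ∀ p : ℝ, min (S p) (D p) ≤ min (S pa) (D pa))
    (hQa : Qa = min (S pa) (D pa))
    (hBMle : ∀ p : ℝ, VBM p ≤ VB p)
    (hSMle : ∀ p : ℝ, VSM p ≤ VS p)
    (hBMabove : ∀ p : ℝ, pa < p → VBM p = VB p)
    (hBMbelow : ∀ p : ℝ, p < pa → VBM p = 0)
    (hSMbelow : ∀ p : ℝ, p < pa → VSM p = VS p)
    (hSMabove : ∀ p : ℝ, pa < p → VSM p = 0)
    (hBMsum : (∑ᶠ p : ℝ, VBM p) = Qa)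
    (hSMsum : (∑ᶠ p : ℝ, VSM p) = Qa) :
    ∀ q : ℕ, q ≤ (VS pa - VSM pa) + VBM pa →
      (∀ p : ℝ, min (S p) (D p + q) ≤ min (S pa) (D pa + q)) ∧
      min (S pa) (D pa + q) = Qa + min (VS pa - VSM pa) ((VB pa - VBM pa) + q) := by
  classical
  set T : Finset ℝ := insert pa (hVS.toFinset ∪ hVB.toFinset) with hT
  have hpaT : pa ∈ T := Finset.mem_insert_self _ _
  have hVSsub : Function.support VS ⊆ ↑T := by
    intro x hx
    simp [hT, Set.Finite.mem_toFinset, hx]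
  have hVBsub : Function.support VB ⊆ ↑T := by
    intro x hx
    simp [hT, Set.Finite.mem_toFinset, hx]
  have hVSMsub : Function.support VSM ⊆ ↑T := fun x hx => hVSsub (fun h => hx (Nat.le_zero.mp (h ▸ hSMle x)))
  have hVBMsub : Function.support VBM ⊆ ↑T := fun x hx => hVBsub (fun h => hx (Nat.le_zero.mp (h ▸ hBMle x)))
  -- S and D as finset sums
  have hSsum : ∀ p : ℝ, S p = ∑ p' ∈ T.filter (fun p' => p' ≤ p), VS p' := by
    intro p
    rw [hS p]
    refine finsum_mem_eq_sum_of_subset _ ?_ ?_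
    · intro x hx
      simp only [Finset.coe_filter, Set.mem_setOf_eq]
      exact ⟨hVSsub hx.2, hx.1⟩
    · intro x hx
      simp only [Finset.coe_filter, Set.mem_setOf_eq] at hx
      exact hx.2
  have hDsum : ∀ p : ℝ, D p = ∑ p' ∈ T.filter (fun p' => p ≤ p'), VB p' := by
    intro p
    rw [hD p]
    refine finsum_mem_eq_sum_of_subset _ ?_ ?_
    · intro x hx
      simp only [Finset.coe_filter, Set.mem_setOf_eq]
      exact ⟨hVBsub hx.2, hx.1⟩
    · intro x hx
      simp only [Finset.coe_filter, Set.mem_setOf_eq] at hx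
      exact hx.2
  have hQS : Qa = ∑ p' ∈ T, VSM p' := by
    rw [← hSMsum, finsum_eq_sum_of_support_subset _ hVSMsub]
  have hQB : Qa = ∑ p' ∈ T, VBM p' := by
    rw [← hBMsum, finsum_eq_sum_of_support_subset _ hVBMsub]
  -- key fact 1 : S pa + VSM pa = Qa + VS pa
  have hfilt_le : T.filter (fun p' => p' ≤ pa) = insert pa (T.filter (fun p' => p' < pa)) := by
    ext x
    simp only [Finset.mem_filter, Finset.mem_insert]
    constructor
    · rintro ⟨hx, hle⟩
      rcases lt_or_eq_of_le hle with h | h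
      · exact Or.inr ⟨hx, h⟩
      · exact Or.inl h
    · rintro (rfl | ⟨hx, hlt⟩)
      · exact ⟨hpaT, le_refl _⟩
      · exact ⟨hx, le_of_lt hlt⟩
  have hpanotlt : pa ∉ T.filter (fun p' => p' < pa) := by
    simp
  have key1 : S pa + VSM pa = Qa + VS pa := by
    have h1 : S pa = VS pa + ∑ p' ∈ T.filter (fun p' => p' < pa), VS p' := by
      rw [hSsum pa, hfilt_le, Finset.sum_insert hpanotlt]
    have h2 : Qa = VSM pa + ∑ p' ∈ T.filter (fun p' => p' < pa), VSM p' := by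
      rw [hQS, ← Finset.sum_filter_add_sum_filter_not T (fun p' => p' < pa)]
      have : ∑ p' ∈ T.filter (fun p' => ¬ p' < pa), VSM p' = VSM pa := by
        rw [Finset.sum_eq_single_of_mem pa (by simp [hpaT])]
        intro b hb hne
        simp only [Finset.mem_filter, not_lt] at hb
        exact hSMabove b (lt_of_le_of_ne hb.2 (Ne.symm hne))
      omega
    have h3 : ∑ p' ∈ T.filter (fun p' => p' < pa), VSM p'
        = ∑ p' ∈ T.filter (fun p' => p' < pa), VS p' := by
      refine Finset.sum_congr rfl fun x hx => ?_
      exact hSMbelow x (Finset.mem_filter.mp hx).2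
    omega
  -- key fact 2 : D pa + VBM pa = Qa + VB pa
  have hfilt_ge : T.filter (fun p' => pa ≤ p') = insert pa (T.filter (fun p' => pa < p')) := by
    ext x
    simp only [Finset.mem_filter, Finset.mem_insert]
    constructor
    · rintro ⟨hx, hle⟩
      rcases lt_or_eq_of_le hle with h | h
      · exact Or.inr ⟨hx, h⟩
      · exact Or.inl h.symm
    · rintro (rfl | ⟨hx, hlt⟩)
      · exact ⟨hpaT, le_refl _⟩
      · exact ⟨hx, le_of_lt hlt⟩
  have hpanotgt : pa ∉ T.filter (fun p' => pa < p') := by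
    simp
  have key2 : D pa + VBM pa = Qa + VB pa := by
    have h1 : D pa = VB pa + ∑ p' ∈ T.filter (fun p' => pa < p'), VB p' := by
      rw [hDsum pa, hfilt_ge, Finset.sum_insert hpanotgt]
    have h2 : Qa = VBM pa + ∑ p' ∈ T.filter (fun p' => pa < p'), VBM p' := by
      rw [hQB, ← Finset.sum_filter_add_sum_filter_not T (fun p' => pa < p')]
      have : ∑ p' ∈ T.filter (fun p' => ¬ pa < p'), VBM p' = VBM pa := by
        rw [Finset.sum_eq_single_of_mem pa (by simp [hpaT])]
        intro b hb hne
        simp only [Finset.mem_filter, not_lt] at hb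
        exact hBMbelow b (lt_of_le_of_ne hb.2 hne)
      omega
    have h3 : ∑ p' ∈ T.filter (fun p' => pa < p'), VBM p'
        = ∑ p' ∈ T.filter (fun p' => pa < p'), VB p' := by
      refine Finset.sum_congr rfl fun x hx => ?_
      exact hBMabove x (Finset.mem_filter.mp hx).2
    omega
  -- key fact 3 : for p < pa, S p ≤ Qa
  have key3 : ∀ p : ℝ, p < pa → S p ≤ Qa := by
    intro p hp
    rw [hSsum p, hQS]
    calc ∑ p' ∈ T.filter (fun p' => p' ≤ p), VS p'
        = ∑ p' ∈ T.filter (fun p' => p' ≤ p), VSM p' := by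
          refine Finset.sum_congr rfl fun x hx => ?_
          exact (hSMbelow x (lt_of_le_of_lt (Finset.mem_filter.mp hx).2 hp)).symm
      _ ≤ ∑ p' ∈ T, VSM p' :=
          Finset.sum_le_sum_of_subset (Finset.filter_subset _ _)
  -- key fact 4 : for p > pa, D p + VBM pa ≤ Qa
  have key4 : ∀ p : ℝ, pa < p → D p + VBM pa ≤ Qa := by
    intro p hp
    have hDeq : D p = ∑ p' ∈ T.filter (fun p' => p ≤ p'), VBM p' := by
      rw [hDsum p]
      refine Finset.sum_congr rfl fun x hx => ?_
      exact (hBMabove x (lt_of_lt_of_le hp (Finset.mem_filter.mp hx).2)).symm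
    have hpanot : pa ∉ T.filter (fun p' => p ≤ p') := by
      simp only [Finset.mem_filter, not_and, not_le]
      intro _
      exact hp
    rw [hDeq, hQB]
    calc (∑ p' ∈ T.filter (fun p' => p ≤ p'), VBM p') + VBM pa
        = ∑ p' ∈ insert pa (T.filter (fun p' => p ≤ p')), VBM p' := by
          rw [Finset.sum_insert hpanot]; ring
      _ ≤ ∑ p' ∈ T, VBM p' := by
          refine Finset.sum_le_sum_of_subset ?_
          intro x hx
          rcases Finset.mem_insert.mp hx with rfl | hx
          · exact hpaT
          · exact Finset.mem_filter.mp hx |>.1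
  have hSMpa := hSMle pa
  have hBMpa := hBMle pa
  intro q hq
  have hQaS : Qa ≤ S pa := hQa ▸ min_le_left _ _
  have hQaD : Qa ≤ D pa := hQa ▸ min_le_right _ _
  constructor
  · intro p
    rcases lt_trichotomy p pa with h | rfl | h
    · have := key3 p h
      omega
    · omega
    · have := key4 p h
      omega
  · omega
end

section
/- Let an auction order book be given with an auction price p_a, auction volume Q_a = min(S(p_a), D(p_a)), and a matching at (p_a, Q_a). Suppose there exists a price strictly greater than p_a carrying positive posted volume, and let p_B^(1) be the smallest such price. Set q_B^(0) = V_S^R(p_a) + V_B^M(p_a). Then after submitting a buy market order of size exactly q_B^(0), both p_a and p_B^(1) maximize p ↦ min(S(p), D(p) + q_B^(0)), and the common maximal value is Q_a + V_S^R(p_a). -/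
/-- Let `pB1` be the smallest price strictly greater than the
auction price `pa` carrying positive posted volume.  After submitting a buy
market order of size exactly `q_B^(0) = V_S^R(pa) + V_B^M(pa)` (replacing the
demand `D` by `D + q_B^(0)`), both `pa` and `pB1` maximize the exchanged
volume `p ↦ min (S p) (D p + q_B^(0))`, and the common maximal value is
`Qa + V_S^R(pa)`. -/
theorem buy_order_boundary_two_maximizers
    (VB VS VBM VSM : ℝ → ℕ)
    (hVB : (Function.support VB).Finite)
    (hVS : (Function.support VS).Finite)
    (S D : ℝ → ℕ)
    (hS : ∀ p : ℝ, S p = ∑ᶠ p' ∈ {p' : ℝ | p' ≤ p}, VS p')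
    (hD : ∀ p : ℝ, D p = ∑ᶠ p' ∈ {p' : ℝ | p ≤ p'}, VB p')
    (pa : ℝ) (Qa : ℕ)
    (hmax : ∀ p : ℝ, min (S p) (D p) ≤ min (S pa) (D pa))
    (hQa : Qa = min (S pa) (D pa))
    (hBMle : ∀ p : ℝ, VBM p ≤ VB p)
    (hSMle : ∀ p : ℝ, VSM p ≤ VS p)
    (hBMabove : ∀ p : ℝ, pa < p → VBM p = VB p)
    (hBMbelow : ∀ p : ℝ, p < pa → VBM p = 0)
    (hSMbelow : ∀ p : ℝ, p < pa → VSM p = VS p)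
    (hSMabove : ∀ p : ℝ, pa < p → VSM p = 0)
    (hBMsum : (∑ᶠ p : ℝ, VBM p) = Qa)
    (hSMsum : (∑ᶠ p : ℝ, VSM p) = Qa)
    (pB1 : ℝ)
    (hpB1gt : pa < pB1)
    (hpB1pos : 0 < VB pB1 + VS pB1)
    (hpB1min : ∀ p : ℝ, pa < p → 0 < VB p + VS p → pB1 ≤ p) :
    (∀ p : ℝ, min (S p) (D p + ((VS pa - VSM pa) + VBM pa)) ≤
        min (S pa) (D pa + ((VS pa - VSM pa) + VBM pa))) ∧
    (∀ p : ℝ, min (S p) (D p + ((VS pa - VSM pa) + VBM pa)) ≤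
        min (S pB1) (D pB1 + ((VS pa - VSM pa) + VBM pa))) ∧
    min (S pa) (D pa + ((VS pa - VSM pa) + VBM pa)) = Qa + (VS pa - VSM pa) ∧
    min (S pB1) (D pB1 + ((VS pa - VSM pa) + VBM pa)) = Qa + (VS pa - VSM pa) := by
  classical
  have hVSM : Function.support VSM ⊆ Function.support VS := fun x hx => by
    simp only [Function.mem_support] at *; exact fun h => hx (Nat.le_zero.mp (h ▸ hSMle x))
  have hVBM : Function.support VBM ⊆ Function.support VB := fun x hx => by
    simp only [Function.mem_support] at *; exact fun h => hx (Nat.le_zero.mp (h ▸ hBMle x))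
  set A : Finset ℝ := hVS.toFinset ∪ {pa} with hA
  set B : Finset ℝ := hVB.toFinset ∪ {pa, pB1} with hB
  have hpaA : pa ∈ A := by simp [hA]
  have hpaB : pa ∈ B := by simp [hB]
  have hSsum : ∀ p : ℝ, S p = ∑ x ∈ A.filter (· ≤ p), VS x := by
    intro p
    rw [hS]
    apply finsum_mem_eq_sum_of_inter_support_eq
    ext x
    simp only [Set.mem_inter_iff, Set.mem_setOf_eq, Finset.coe_filter, hA,
      Function.mem_support, Finset.mem_union, Set.Finite.mem_toFinset]
    constructor
    · rintro ⟨h1, h2⟩; exact ⟨⟨Or.inl h2, h1⟩, h2⟩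
    · rintro ⟨⟨_, h1⟩, h2⟩; exact ⟨h1, h2⟩
  have hDsum : ∀ p : ℝ, D p = ∑ x ∈ B.filter (p ≤ ·), VB x := by
    intro p
    rw [hD]
    apply finsum_mem_eq_sum_of_inter_support_eq
    ext x
    simp only [Set.mem_inter_iff, Set.mem_setOf_eq, Finset.coe_filter, hB,
      Function.mem_support, Finset.mem_union, Set.Finite.mem_toFinset]
    constructor
    · rintro ⟨h1, h2⟩; exact ⟨⟨Or.inl h2, h1⟩, h2⟩
    · rintro ⟨⟨_, h1⟩, h2⟩; exact ⟨h1, h2⟩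
  -- supply side
  set C : ℕ := ∑ x ∈ A.filter (· < pa), VS x with hC
  have hQS : Qa = C + VSM pa := by
    rw [← hSMsum, finsum_eq_sum_of_support_subset VSM
      (show Function.support VSM ⊆ (A : Set ℝ) from fun x hx => by
        simp [hA, Set.Finite.mem_toFinset]; exact Or.inr (hVSM hx)),
      ← Finset.sum_filter_add_sum_filter_not A (· < pa)]
    congr 1
    · exact Finset.sum_congr rfl fun x hx => hSMbelow x (Finset.mem_filter.mp hx).2
    · rw [Finset.sum_eq_single pa]
      · intro x hx hne
        rcases lt_trichotomy x pa with h | h | h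
        · exact absurd h (Finset.mem_filter.mp hx).2
        · exact absurd h hne
        · exact hSMabove x h
      · intro h; exact absurd (Finset.mem_filter.mpr ⟨hpaA, lt_irrefl pa⟩) h
  have hfiltS : A.filter (· ≤ pa) = insert pa (A.filter (· < pa)) := by
    ext x
    simp only [Finset.mem_filter, Finset.mem_insert]
    constructor
    · rintro ⟨hx, hle⟩
      rcases eq_or_lt_of_le hle with h | h
      · exact Or.inl h
      · exact Or.inr ⟨hx, h⟩
    · rintro (rfl | ⟨hx, hlt⟩)
      · exact ⟨hpaA, le_refl _⟩
      · exact ⟨hx, le_of_lt hlt⟩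
  have hSpa : S pa = C + VS pa := by
    rw [hSsum, hfiltS, Finset.sum_insert (by simp), hC, Nat.add_comm]
  -- demand side
  set E : ℕ := ∑ x ∈ B.filter (pa < ·), VB x with hE
  have hQB : Qa = VBM pa + E := by
    rw [← hBMsum, finsum_eq_sum_of_support_subset VBM
      (show Function.support VBM ⊆ (B : Set ℝ) from fun x hx => by
        simp [hB, Set.Finite.mem_toFinset]; exact Or.inr (Or.inr (Function.mem_support.mp (hVBM hx)))),
      ← Finset.sum_filter_add_sum_filter_not B (pa < ·), Nat.add_comm]
    congr 1
    · rw [Finset.sum_eq_single pa]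
      · intro x hx hne
        rcases lt_trichotomy x pa with h | h | h
        · exact hBMbelow x h
        · exact absurd h hne
        · exact absurd h (Finset.mem_filter.mp hx).2
      · intro h; exact absurd (Finset.mem_filter.mpr ⟨hpaB, lt_irrefl pa⟩) h
    · exact Finset.sum_congr rfl fun x hx => hBMabove x (Finset.mem_filter.mp hx).2
  have hfiltD : B.filter (pa ≤ ·) = insert pa (B.filter (pa < ·)) := by
    ext x
    simp only [Finset.mem_filter, Finset.mem_insert]
    constructor
    · rintro ⟨hx, hle⟩
      rcases eq_or_lt_of_le hle with h | h
      · exact Or.inl h.symm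
      · exact Or.inr ⟨hx, h⟩
    · rintro (rfl | ⟨hx, hlt⟩)
      · exact ⟨hpaB, le_refl _⟩
      · exact ⟨hx, le_of_lt hlt⟩
  have hDpa : D pa = VB pa + E := by
    rw [hDsum, hfiltD, Finset.sum_insert (by simp), hE]
  have hDgt : ∀ p : ℝ, pa < p → D p ≤ E := by
    intro p hp
    rw [hDsum, hE]
    apply Finset.sum_le_sum_of_subset
    intro x hx
    simp only [Finset.mem_filter] at *
    exact ⟨hx.1, lt_of_lt_of_le hp hx.2⟩
  have hDpB1 : D pB1 = E := by
    rw [hDsum, hE]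
    apply Finset.sum_subset
    · intro x hx
      simp only [Finset.mem_filter] at *
      exact ⟨hx.1, lt_of_lt_of_le hpB1gt hx.2⟩
    · intro x hx hnx
      simp only [Finset.mem_filter, not_and] at hx hnx
      have hlt : ¬ pB1 ≤ x := fun h => hnx hx.1 h
      by_contra h
      exact hlt (hpB1min x hx.2 (by omega))
  have hSmono : ∀ p q : ℝ, p ≤ q → S p ≤ S q := by
    intro p q hpq
    rw [hSsum, hSsum]
    apply Finset.sum_le_sum_of_subset
    intro x hx
    simp only [Finset.mem_filter] at *
    exact ⟨hx.1, le_trans hx.2 hpq⟩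
  have hSpB1 : S pa ≤ S pB1 := hSmono _ _ (le_of_lt hpB1gt)
  have hle := hSMle pa
  refine ⟨?_, ?_, by omega, by omega⟩
  · intro p
    rcases le_or_gt p pa with h | h
    · have := hSmono p pa h; omega
    · have := hDgt p h; omega
  · intro p
    rcases le_or_gt p pa with h | h
    · have := hSmono p pa h; omega
    · have := hDgt p h; omega
end

section
/- Let an auction order book be given with an auction price p_a, auction volume Q_a = min(S(p_a), D(p_a)), and a matching at (p_a, Q_a). Set q_S^(0) = V_S^M(p_a) + V_B^R(p_a). Then for every natural number q with 0 ≤ q ≤ q_S^(0) and every price p, min(S(p) + q, D(p)) ≤ min(S(p_a) + q, D(p_a)); that is, after submitting a sell market order of size at most q_S^(0), the original auction price p_a still maximizes the exchanged volume (zero price impact). Moreover the maximal exchanged volume after the submission equals Q_a + min(V_S^R(p_a) + q, V_B^R(p_a)). -/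
/-- Submitting a sell market order of size
`q ≤ q_S^(0) = V_S^M(pa) + V_B^R(pa)` just before the clearing (replacing the
supply `S` by `S + q`) has zero price impact: `pa` still maximizes the
exchanged volume, and the new maximal exchanged volume is
`Qa + min (V_S^R(pa) + q) (V_B^R(pa))`. -/
theorem sell_order_zero_impact
    (VB VS VBM VSM : ℝ → ℕ)
    (hVB : (Function.support VB).Finite)
    (hVS : (Function.support VS).Finite)
    (S D : ℝ → ℕ)
    (hS : ∀ p : ℝ, S p = ∑ᶠ p' ∈ {p' : ℝ | p' ≤ p}, VS p')
    (hD : ∀ p : ℝ, D p = ∑ᶠ p' ∈ {p' : ℝ | p ≤ p'}, VB p')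
    (pa : ℝ) (Qa : ℕ)
    (hmax : ∀ p : ℝ, min (S p) (D p) ≤ min (S pa) (D pa))
    (hQa : Qa = min (S pa) (D pa))
    (hBMle : ∀ p : ℝ, VBM p ≤ VB p)
    (hSMle : ∀ p : ℝ, VSM p ≤ VS p)
    (hBMabove : ∀ p : ℝ, pa < p → VBM p = VB p)
    (hBMbelow : ∀ p : ℝ, p < pa → VBM p = 0)
    (hSMbelow : ∀ p : ℝ, p < pa → VSM p = VS p)
    (hSMabove : ∀ p : ℝ, pa < p → VSM p = 0)
    (hBMsum : (∑ᶠ p : ℝ, VBM p) = Qa)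
    (hSMsum : (∑ᶠ p : ℝ, VSM p) = Qa) :
    ∀ q : ℕ, q ≤ VSM pa + (VB pa - VBM pa) →
      (∀ p : ℝ, min (S p + q) (D p) ≤ min (S pa + q) (D pa)) ∧
      min (S pa + q) (D pa) = Qa + min ((VS pa - VSM pa) + q) (VB pa - VBM pa) := by
  classical
  set T : Finset ℝ := insert pa ((hVB.union hVS).toFinset) with hT
  have hTB : Function.support VB ⊆ ↑T := by
    intro x hx
    simp [hT, Set.Finite.mem_toFinset]
    right; left; exact hx
  have hTS : Function.support VS ⊆ ↑T := by
    intro x hx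
    simp [hT, Set.Finite.mem_toFinset]
    right; right; exact hx
  have hTBM : Function.support VBM ⊆ ↑T := by
    intro x hx
    apply hTB
    have := hBMle x
    simp only [Function.mem_support] at *
    omega
  have hTSM : Function.support VSM ⊆ ↑T := by
    intro x hx
    apply hTS
    have := hSMle x
    simp only [Function.mem_support] at *
    omega
  have hpaT : pa ∈ T := by simp [hT]
  -- Express S, D as finset sums
  have hSsum : ∀ p, S p = ∑ p' ∈ T.filter (· ≤ p), VS p' := by
    intro p
    rw [hS p]
    apply finsum_mem_eq_sum_of_inter_support_eq
    ext x
    simp only [Set.mem_inter_iff, Set.mem_setOf_eq, Finset.coe_filter, Function.mem_support]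
    constructor
    · rintro ⟨h1, h2⟩
      exact ⟨⟨hTS h2, h1⟩, h2⟩
    · rintro ⟨⟨_, h1⟩, h2⟩
      exact ⟨h1, h2⟩
  have hDsum : ∀ p, D p = ∑ p' ∈ T.filter (p ≤ ·), VB p' := by
    intro p
    rw [hD p]
    apply finsum_mem_eq_sum_of_inter_support_eq
    ext x
    simp only [Set.mem_inter_iff, Set.mem_setOf_eq, Finset.coe_filter, Function.mem_support]
    constructor
    · rintro ⟨h1, h2⟩
      exact ⟨⟨hTB h2, h1⟩, h2⟩
    · rintro ⟨⟨_, h1⟩, h2⟩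
      exact ⟨h1, h2⟩
  have hQB : Qa = ∑ p' ∈ T, VBM p' := by
    rw [← hBMsum]
    exact finsum_eq_sum_of_support_subset _ hTBM
  have hQS : Qa = ∑ p' ∈ T, VSM p' := by
    rw [← hSMsum]
    exact finsum_eq_sum_of_support_subset _ hTSM
  set L : Finset ℝ := T.filter (· < pa) with hL
  set G : Finset ℝ := T.filter (pa < ·) with hG
  have hpaG : pa ∉ G := by simp [hG]
  have hpaL : pa ∉ L := by simp [hL]
  -- split T into L, {pa}, G
  have hTsplit : ∀ f : ℝ → ℕ, ∑ p' ∈ T, f p' = (∑ p' ∈ L, f p') + f pa + ∑ p' ∈ G, f p' := by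
    intro f
    have h1 : T = L ∪ (insert pa G) := by
      ext x
      simp only [hL, hG, Finset.mem_union, Finset.mem_filter, Finset.mem_insert]
      constructor
      · intro hx
        rcases lt_trichotomy x pa with h | h | h
        · exact Or.inl ⟨hx, h⟩
        · exact Or.inr (Or.inl h)
        · exact Or.inr (Or.inr ⟨hx, h⟩)
      · rintro (⟨hx, _⟩ | h | ⟨hx, _⟩)
        · exact hx
        · rw [h]; exact hpaT
        · exact hx
    have hdisj : Disjoint L (insert pa G) := by
      rw [Finset.disjoint_left]
      intro x hx hx'
      simp only [hL, Finset.mem_filter] at hx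
      simp only [hG, Finset.mem_insert, Finset.mem_filter] at hx'
      rcases hx' with h | ⟨_, h⟩
      · exact absurd hx.2 (by rw [h]; exact lt_irrefl pa)
      · exact absurd (hx.2.trans h) (lt_irrefl x)
    rw [h1, Finset.sum_union hdisj, Finset.sum_insert hpaG]
    ring
  -- filter (pa ≤ ·) = insert pa G
  have hfilterGe : T.filter (pa ≤ ·) = insert pa G := by
    ext x
    simp only [hG, Finset.mem_filter, Finset.mem_insert]
    constructor
    · rintro ⟨hx, h⟩
      rcases eq_or_lt_of_le h with h | h
      · exact Or.inl h.symm
      · exact Or.inr ⟨hx, h⟩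
    · rintro (h | ⟨hx, h⟩)
      · rw [h]; exact ⟨hpaT, le_refl _⟩
      · exact ⟨hx, le_of_lt h⟩
  have hfilterLe : T.filter (· ≤ pa) = insert pa L := by
    ext x
    simp only [hL, Finset.mem_filter, Finset.mem_insert]
    constructor
    · rintro ⟨hx, h⟩
      rcases eq_or_lt_of_le h with h | h
      · exact Or.inl h
      · exact Or.inr ⟨hx, h⟩
    · rintro (h | ⟨hx, h⟩)
      · rw [h]; exact ⟨hpaT, le_refl _⟩
      · exact ⟨hx, le_of_lt h⟩
  -- congruences on L and G
  have hGcong : ∑ p' ∈ G, VBM p' = ∑ p' ∈ G, VB p' := by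
    apply Finset.sum_congr rfl
    intro x hx
    simp only [hG, Finset.mem_filter] at hx
    exact hBMabove x hx.2
  have hLcong : ∑ p' ∈ L, VSM p' = ∑ p' ∈ L, VS p' := by
    apply Finset.sum_congr rfl
    intro x hx
    simp only [hL, Finset.mem_filter] at hx
    exact hSMbelow x hx.2
  have hLzero : ∑ p' ∈ L, VBM p' = 0 := by
    apply Finset.sum_eq_zero
    intro x hx
    simp only [hL, Finset.mem_filter] at hx
    exact hBMbelow x hx.2
  have hGzero : ∑ p' ∈ G, VSM p' = 0 := by
    apply Finset.sum_eq_zero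
    intro x hx
    simp only [hG, Finset.mem_filter] at hx
    exact hSMabove x hx.2
  -- Key identity A : D pa + VBM pa = Qa + VB pa
  have hQB' : Qa = VBM pa + ∑ p' ∈ G, VB p' := by
    rw [hQB, hTsplit VBM, hLzero, hGcong]; ring
  have hDpa : D pa = VB pa + ∑ p' ∈ G, VB p' := by
    rw [hDsum pa, hfilterGe, Finset.sum_insert hpaG]
  have hA : D pa + VBM pa = Qa + VB pa := by omega
  -- Key identity B : S pa + VSM pa = Qa + VS pa
  have hQS' : Qa = VSM pa + ∑ p' ∈ L, VS p' := by
    rw [hQS, hTsplit VSM, hGzero, hLcong]; ring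
  have hSpa : S pa = VS pa + ∑ p' ∈ L, VS p' := by
    rw [hSsum pa, hfilterLe, Finset.sum_insert hpaL]
  have hB : S pa + VSM pa = Qa + VS pa := by omega
  have hBMpa := hBMle pa
  have hSMpa := hSMle pa
  intro q hq
  constructor
  · intro p
    rcases lt_trichotomy p pa with hp | hp | hp
    · -- p < pa : S p + VSM pa ≤ Qa
      have hC : S p + VSM pa ≤ Qa := by
        have hsub : T.filter (· ≤ p) ⊆ L := by
          intro x hx
          simp only [hL, Finset.mem_filter] at *
          exact ⟨hx.1, lt_of_le_of_lt hx.2 hp⟩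
        have := Finset.sum_le_sum_of_subset (f := VS) hsub
        rw [← hSsum p] at this
        omega
      omega
    · rw [hp]
    · -- p > pa : D p + VBM pa ≤ Qa
      have hD' : D p + VBM pa ≤ Qa := by
        have hsub : T.filter (p ≤ ·) ⊆ G := by
          intro x hx
          simp only [hG, Finset.mem_filter] at *
          exact ⟨hx.1, lt_of_lt_of_le hp hx.2⟩
        have := Finset.sum_le_sum_of_subset (f := VB) hsub
        rw [← hDsum p] at this
        omega
      omega
  · omega
end

section
/- Let an auction order book be given with an auction price p_a, auction volume Q_a = min(S(p_a), D(p_a)), and a matching at (p_a, Q_a). Let p_B^(1) < p_B^(2) < … be the successive prices strictly greater than p_a carrying positive posted volume, and define q_B^(0) = V_S^R(p_a) + V_B^M(p_a) and, for i ≥ 1, q_B^(i) = q_B^(i−1) + V_S(p_B^(i)) + V_B(p_B^(i)). Then for every i ≥ 1 such that p_B^(i) exists and every natural number q with q_B^(i−1) ≤ q ≤ q_B^(i), the price p_B^(i) maximizes p ↦ min(S(p), D(p) + q) over all prices; that is, after a buy market order of size q with q_B^(i−1) ≤ q ≤ q_B^(i), the new auction price is p_B^(i). -/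
/-- Let `pB 1 < pB 2 < … < pB n` be the successive prices
strictly greater than `pa` carrying positive posted volume, and let
`qB 0 = V_S^R(pa) + V_B^M(pa)` and `qB k = qB (k−1) + V_S(pB k) + V_B(pB k)`
for `1 ≤ k ≤ n`.  Then for every `1 ≤ i ≤ n` and every buy market order size
`q` with `qB (i−1) ≤ q ≤ qB i`, the price `pB i` maximizes the new exchanged
volume `p ↦ min (S p) (D p + q)`: the new auction price is `pB i`. -/
theorem buy_order_impact_discontinuities
    (VB VS VBM VSM : ℝ → ℕ)
    (hVB : (Function.support VB).Finite)
    (hVS : (Function.support VS).Finite)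
    (S D : ℝ → ℕ)
    (hS : ∀ p : ℝ, S p = ∑ᶠ p' ∈ {p' : ℝ | p' ≤ p}, VS p')
    (hD : ∀ p : ℝ, D p = ∑ᶠ p' ∈ {p' : ℝ | p ≤ p'}, VB p')
    (pa : ℝ) (Qa : ℕ)
    (hmax : ∀ p : ℝ, min (S p) (D p) ≤ min (S pa) (D pa))
    (hQa : Qa = min (S pa) (D pa))
    (hBMle : ∀ p : ℝ, VBM p ≤ VB p)
    (hSMle : ∀ p : ℝ, VSM p ≤ VS p)
    (hBMabove : ∀ p : ℝ, pa < p → VBM p = VB p)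
    (hBMbelow : ∀ p : ℝ, p < pa → VBM p = 0)
    (hSMbelow : ∀ p : ℝ, p < pa → VSM p = VS p)
    (hSMabove : ∀ p : ℝ, pa < p → VSM p = 0)
    (hBMsum : (∑ᶠ p : ℝ, VBM p) = Qa)
    (hSMsum : (∑ᶠ p : ℝ, VSM p) = Qa)
    (n : ℕ) (pB : ℕ → ℝ)
    (hpBgt : ∀ k : ℕ, 1 ≤ k → k ≤ n → pa < pB k)
    (hpBmono : ∀ k : ℕ, 1 ≤ k → k + 1 ≤ n → pB k < pB (k + 1))
    (hpBpos : ∀ k : ℕ, 1 ≤ k → k ≤ n → 0 < VB (pB k) + VS (pB k))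
    (hgap0 : 1 ≤ n → ∀ p : ℝ, pa < p → p < pB 1 → VB p + VS p = 0)
    (hgap : ∀ k : ℕ, 1 ≤ k → k + 1 ≤ n →
      ∀ p : ℝ, pB k < p → p < pB (k + 1) → VB p + VS p = 0)
    (qB : ℕ → ℕ)
    (hqB0 : qB 0 = (VS pa - VSM pa) + VBM pa)
    (hqBrec : ∀ k : ℕ, 1 ≤ k → k ≤ n →
      qB k = qB (k - 1) + VS (pB k) + VB (pB k)) :
    ∀ i : ℕ, 1 ≤ i → i ≤ n →
      ∀ q : ℕ, qB (i - 1) ≤ q → q ≤ qB i →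
        ∀ p : ℝ, min (S p) (D p + q) ≤ min (S (pB i)) (D (pB i) + q) := by
  classical
  intro i hi1 hin q hq1 hq2 p
  set P := pB i with hPdef
  set F : Finset ℝ := insert pa (hVB.toFinset ∪ hVS.toFinset) with hFdef
  have hpaF : pa ∈ F := Finset.mem_insert_self _ _
  have hVBF : ∀ x, VB x ≠ 0 → x ∈ F := fun x hx =>
    Finset.mem_insert_of_mem (Finset.mem_union_left _ (hVB.mem_toFinset.2 hx))
  have hVSF : ∀ x, VS x ≠ 0 → x ∈ F := fun x hx =>
    Finset.mem_insert_of_mem (Finset.mem_union_right _ (hVS.mem_toFinset.2 hx))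
  -- Finset formulas for S and D
  have SF : ∀ r : ℝ, S r = ∑ x ∈ F.filter (fun x => x ≤ r), VS x := by
    intro r
    rw [hS r]
    apply finsum_mem_eq_sum_of_inter_support_eq
    ext x
    simp only [Set.mem_inter_iff, Set.mem_setOf_eq, Function.mem_support, Finset.coe_filter]
    exact ⟨fun h => ⟨⟨hVSF x h.2, h.1⟩, h.2⟩, fun h => ⟨h.1.2, h.2⟩⟩
  have DF : ∀ r : ℝ, D r = ∑ x ∈ F.filter (fun x => r ≤ x), VB x := by
    intro r
    rw [hD r]
    apply finsum_mem_eq_sum_of_inter_support_eq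
    ext x
    simp only [Set.mem_inter_iff, Set.mem_setOf_eq, Function.mem_support, Finset.coe_filter]
    exact ⟨fun h => ⟨⟨hVBF x h.2, h.1⟩, h.2⟩, fun h => ⟨h.1.2, h.2⟩⟩
  -- monotonicity of S
  have Smono : ∀ a b : ℝ, a ≤ b → S a ≤ S b := by
    intro a b hab
    rw [SF a, SF b]
    apply Finset.sum_le_sum_of_subset
    intro x hx
    simp only [Finset.mem_filter] at hx ⊢
    exact ⟨hx.1, hx.2.trans hab⟩
  -- generic splitting lemmas
  have hsplit_le : ∀ (f : ℝ → ℕ) (a b : ℝ), a < b →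
      ∑ x ∈ F.filter (fun x => x ≤ b), f x
        = ∑ x ∈ F.filter (fun x => x ≤ a), f x
          + ∑ x ∈ F.filter (fun x => a < x ∧ x ≤ b), f x := by
    intro f a b hab
    rw [← Finset.sum_filter_add_sum_filter_not (F.filter (fun x => x ≤ b)) (fun x => x ≤ a) f]
    congr 1
    · congr 1
      ext x
      simp only [Finset.mem_filter]
      constructor
      · rintro ⟨⟨h1, _⟩, h3⟩; exact ⟨h1, h3⟩
      · rintro ⟨h1, h2⟩; exact ⟨⟨h1, h2.trans hab.le⟩, h2⟩
    · congr 1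
      ext x
      simp only [Finset.mem_filter, not_le]
      constructor
      · rintro ⟨⟨h1, h2⟩, h3⟩; exact ⟨h1, h3, h2⟩
      · rintro ⟨h1, h2, h3⟩; exact ⟨⟨h1, h3⟩, h2⟩
  have hsplit_gt : ∀ (f : ℝ → ℕ) (a b : ℝ), a < b →
      ∑ x ∈ F.filter (fun x => a < x), f x
        = ∑ x ∈ F.filter (fun x => a < x ∧ x < b), f x
          + ∑ x ∈ F.filter (fun x => b ≤ x), f x := by
    intro f a b hab
    rw [← Finset.sum_filter_add_sum_filter_not (F.filter (fun x => a < x)) (fun x => x < b) f]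
    congr 1
    · congr 1
      ext x
      simp only [Finset.mem_filter]
      constructor
      · rintro ⟨⟨h1, h2⟩, h3⟩; exact ⟨h1, h2, h3⟩
      · rintro ⟨h1, h2, h3⟩; exact ⟨⟨h1, h2⟩, h3⟩
    · congr 1
      ext x
      simp only [Finset.mem_filter, not_lt]
      constructor
      · rintro ⟨⟨h1, _⟩, h3⟩; exact ⟨h1, h3⟩
      · rintro ⟨h1, h2⟩; exact ⟨⟨h1, hab.trans_le h2⟩, h2⟩
  have hsplit3 : ∀ (f : ℝ → ℕ) (a : ℝ), a ∈ F →
      ∑ x ∈ F, f x = ∑ x ∈ F.filter (fun x => x < a), f x + f a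
          + ∑ x ∈ F.filter (fun x => a < x), f x := by
    intro f a haF
    rw [← Finset.insert_erase haF, Finset.sum_insert (Finset.notMem_erase a F)]
    rw [← Finset.sum_filter_add_sum_filter_not (F.erase a) (fun x => x < a) f]
    have e1 : (F.erase a).filter (fun x => x < a) = F.filter (fun x => x < a) := by
      ext x
      simp only [Finset.mem_filter, Finset.mem_erase]
      constructor
      · rintro ⟨⟨_, h1⟩, h2⟩; exact ⟨h1, h2⟩
      · rintro ⟨h1, h2⟩; exact ⟨⟨ne_of_lt h2, h1⟩, h2⟩
    have e2 : (F.erase a).filter (fun x => ¬ x < a) = F.filter (fun x => a < x) := by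
      ext x
      simp only [Finset.mem_filter, Finset.mem_erase, not_lt]
      constructor
      · rintro ⟨⟨h0, h1⟩, h2⟩; exact ⟨h1, lt_of_le_of_ne h2 (Ne.symm h0)⟩
      · rintro ⟨h1, h2⟩; exact ⟨⟨ne_of_gt h2, h1⟩, h2.le⟩
    rw [Finset.insert_erase haF, e1, e2]
    ring
  -- pB is strictly monotone on [1, n]
  have hmono : ∀ l k : ℕ, 1 ≤ k → k < l → l ≤ n → pB k < pB l := by
    intro l
    induction l with
    | zero => intro k _ h _; omega
    | succ m ih =>
      intro k hk hkl hl
      rcases eq_or_lt_of_le (Nat.lt_succ_iff.1 hkl) with h | h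
      · subst h; exact hpBmono k hk hl
      · exact (ih k hk h (by omega)).trans (hpBmono m (by omega) hl)
  -- location lemma
  have hloc : ∀ j : ℕ, 1 ≤ j → j ≤ n → ∀ x : ℝ, pa < x → x < pB j →
      VB x + VS x ≠ 0 → ∃ k, 1 ≤ k ∧ k < j ∧ x = pB k := by
    intro j
    induction j with
    | zero => intro h; omega
    | succ m ih =>
      intro _ hjn x hx1 hx2 hx3
      by_cases hm : m = 0
      · subst hm
        exact absurd (hgap0 hjn x hx1 hx2) hx3
      · rcases lt_trichotomy x (pB m) with h | h | h
        · obtain ⟨k, hk1, hk2, hk3⟩ := ih (by omega) (by omega) x hx1 h hx3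
          exact ⟨k, hk1, by omega, hk3⟩
        · exact ⟨m, by omega, by omega, h⟩
        · exact absurd (hgap m (by omega) hjn x h hx2) hx3
  -- basic facts about P
  have hpaP : pa < P := hpBgt i hi1 hin
  have hPpos : 0 < VB P + VS P := hpBpos i hi1 hin
  have hPF : P ∈ F := by
    by_cases hvb : VB P = 0
    · exact hVSF P (by omega)
    · exact hVBF P hvb
  -- the set of prices strictly between pa and P
  set E : Finset ℝ := F.filter (fun x => pa < x ∧ x < P) with hEdef
  set AS : ℕ := ∑ k ∈ Finset.Icc 1 (i - 1), VS (pB k) with hASdef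
  set AB : ℕ := ∑ k ∈ Finset.Icc 1 (i - 1), VB (pB k) with hABdef
  have himg : E.filter (fun x => VB x + VS x ≠ 0)
      = (Finset.Icc 1 (i - 1)).image pB := by
    ext x
    simp only [Finset.mem_filter, Finset.mem_image, Finset.mem_Icc, hEdef]
    constructor
    · rintro ⟨⟨_, h2, h3⟩, h4⟩
      obtain ⟨k, hk1, hk2, hk3⟩ := hloc i hi1 hin x h2 h3 h4
      exact ⟨k, ⟨hk1, by omega⟩, hk3.symm⟩
    · rintro ⟨k, ⟨hk1, hk2⟩, rfl⟩
      have hkn : k ≤ n := by omega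
      have hki : k < i := by omega
      have hpos := hpBpos k hk1 hkn
      have hxF : pB k ∈ F := by
        by_cases hvb : VB (pB k) = 0
        · exact hVSF (pB k) (by omega)
        · exact hVBF (pB k) hvb
      exact ⟨⟨hxF, hpBgt k hk1 hkn, hmono i k hk1 hki hin⟩, by omega⟩
  have hinj : ∀ a ∈ Finset.Icc 1 (i - 1), ∀ b ∈ Finset.Icc 1 (i - 1),
      pB a = pB b → a = b := by
    intro a ha b hb hab
    simp only [Finset.mem_Icc] at ha hb
    rcases lt_trichotomy a b with h | h | h
    · exact absurd hab (ne_of_lt (hmono b a ha.1 h (by omega)))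
    · exact h
    · exact absurd hab.symm (ne_of_lt (hmono a b hb.1 h (by omega)))
  have hEsum : ∀ f : ℝ → ℕ, (∀ x, f x ≤ VB x + VS x) →
      ∑ x ∈ E, f x = ∑ k ∈ Finset.Icc 1 (i - 1), f (pB k) := by
    intro f hf
    have h1 : ∑ x ∈ E.filter (fun x => VB x + VS x ≠ 0), f x = ∑ x ∈ E, f x := by
      apply Finset.sum_subset (Finset.filter_subset _ _)
      intro x hx hx'
      have h0 : VB x + VS x = 0 := by
        by_contra h
        exact hx' (Finset.mem_filter.2 ⟨hx, h⟩)
      have := hf x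
      omega
    rw [← h1, himg, Finset.sum_image hinj]
  have hESsum : ∑ x ∈ E, VS x = AS := hEsum VS (fun x => by omega)
  have hEBsum : ∑ x ∈ E, VB x = AB := hEsum VB (fun x => by omega)
  -- S P = S pa + AS + VS P
  have hpull : ∑ x ∈ F.filter (fun x => pa < x ∧ x ≤ P), VS x
      = ∑ x ∈ E, VS x + VS P := by
    have e : F.filter (fun x => pa < x ∧ x ≤ P) = insert P E := by
      ext x
      simp only [Finset.mem_filter, Finset.mem_insert, hEdef]
      constructor
      · rintro ⟨h1, h2, h3⟩
        rcases eq_or_lt_of_le h3 with h | h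
        · exact Or.inl h
        · exact Or.inr ⟨h1, h2, h⟩
      · rintro (rfl | ⟨h1, h2, h3⟩)
        · exact ⟨hPF, hpaP, le_refl _⟩
        · exact ⟨h1, h2, h3.le⟩
    rw [e, Finset.sum_insert (by simp [hEdef]), add_comm]
  have hSP : S P = S pa + AS + VS P := by
    rw [SF P, hsplit_le VS pa P hpaP, ← SF pa, hpull, hESsum]
    ring
  -- S p ≤ S pa + AS for pa < p < P
  have hSmid : pa < p → p < P → S p ≤ S pa + AS := by
    intro h1 h2
    rw [SF p, hsplit_le VS pa p h1, ← SF pa, ← hESsum]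
    have : ∑ x ∈ F.filter (fun x => pa < x ∧ x ≤ p), VS x ≤ ∑ x ∈ E, VS x := by
      apply Finset.sum_le_sum_of_subset
      intro x hx
      simp only [Finset.mem_filter, hEdef] at hx ⊢
      exact ⟨hx.1, hx.2.1, lt_of_le_of_lt hx.2.2 h2⟩
    omega
  -- Qa identities
  have hQB : Qa = VBM pa + ∑ x ∈ F.filter (fun x => pa < x), VB x := by
    have hsupp : Function.support VBM ⊆ ↑F := by
      intro x hx
      apply hVBF
      have := hBMle x
      simp only [Function.mem_support] at hx
      omega
    rw [← hBMsum, finsum_eq_sum_of_support_subset VBM hsupp, hsplit3 VBM pa hpaF]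
    have e1 : ∑ x ∈ F.filter (fun x => x < pa), VBM x = 0 := by
      apply Finset.sum_eq_zero
      intro x hx
      simp only [Finset.mem_filter] at hx
      exact hBMbelow x hx.2
    have e2 : ∑ x ∈ F.filter (fun x => pa < x), VBM x
        = ∑ x ∈ F.filter (fun x => pa < x), VB x := by
      apply Finset.sum_congr rfl
      intro x hx
      simp only [Finset.mem_filter] at hx
      exact hBMabove x hx.2
    rw [e1, e2]
    ring
  have hQS : Qa = ∑ x ∈ F.filter (fun x => x < pa), VS x + VSM pa := by
    have hsupp : Function.support VSM ⊆ ↑F := by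
      intro x hx
      apply hVSF
      have := hSMle x
      simp only [Function.mem_support] at hx
      omega
    rw [← hSMsum, finsum_eq_sum_of_support_subset VSM hsupp, hsplit3 VSM pa hpaF]
    have e1 : ∑ x ∈ F.filter (fun x => pa < x), VSM x = 0 := by
      apply Finset.sum_eq_zero
      intro x hx
      simp only [Finset.mem_filter] at hx
      exact hSMabove x hx.2
    have e2 : ∑ x ∈ F.filter (fun x => x < pa), VSM x
        = ∑ x ∈ F.filter (fun x => x < pa), VS x := by
      apply Finset.sum_congr rfl
      intro x hx
      simp only [Finset.mem_filter] at hx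
      exact hSMbelow x hx.2
    rw [e1, e2]
    ring
  have hSpa : S pa = ∑ x ∈ F.filter (fun x => x < pa), VS x + VS pa := by
    rw [SF pa]
    have e : F.filter (fun x => x ≤ pa) = insert pa (F.filter (fun x => x < pa)) := by
      ext x
      simp only [Finset.mem_filter, Finset.mem_insert]
      constructor
      · rintro ⟨h1, h2⟩
        rcases eq_or_lt_of_le h2 with h | h
        · exact Or.inl h
        · exact Or.inr ⟨h1, h⟩
      · rintro (rfl | ⟨h1, h2⟩)
        · exact ⟨hpaF, le_refl _⟩
        · exact ⟨h1, h2.le⟩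
    rw [e, Finset.sum_insert (by simp), add_comm]
  have he3 : S pa + VSM pa = VS pa + Qa := by omega
  -- D split: Qa = VBM pa + AB + D P
  have hQBP : Qa = VBM pa + AB + D P := by
    rw [hQB, hsplit_gt VB pa P hpaP, ← DF P, hEBsum]
    ring
  -- qB telescoping
  have hqtel : ∀ j : ℕ, j ≤ n →
      qB j = qB 0 + ∑ k ∈ Finset.Icc 1 j, (VS (pB k) + VB (pB k)) := by
    intro j
    induction j with
    | zero => intro _; simp
    | succ m ih =>
      intro h
      have hm1 : (m + 1) - 1 = m := rfl
      rw [hqBrec (m + 1) (by omega) h, hm1, ih (by omega),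
        Finset.sum_Icc_succ_top (by omega : 1 ≤ m + 1)]
      ring
  have hqBi1 : qB (i - 1) = (VS pa - VSM pa) + VBM pa + AS + AB := by
    rw [hqtel (i - 1) (by omega), hqB0, Finset.sum_add_distrib, ← hASdef, ← hABdef]
    omega
  have hqBi : qB i = qB (i - 1) + VS P + VB P := hqBrec i hi1 hin
  have hSMpa : VSM pa ≤ VS pa := hSMle pa
  -- key identity: D P + qB (i-1) = S pa + AS
  have hkey : D P + qB (i - 1) = S pa + AS := by omega
  -- final case analysis
  rcases le_or_gt p pa with hc1 | hc1
  · have h1 : S p ≤ S pa := Smono p pa hc1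
    have h2 : S pa ≤ S P := Smono pa P hpaP.le
    refine le_min (le_trans (min_le_left _ _) ?_) (le_trans (min_le_left _ _) ?_) <;> omega
  · rcases lt_trichotomy p P with hc2 | hc2 | hc2
    · have h1 : S p ≤ S pa + AS := hSmid hc1 hc2
      have h2 : S p ≤ S P := Smono p P hc2.le
      refine le_min (le_trans (min_le_left _ _) ?_) (le_trans (min_le_left _ _) ?_) <;> omega
    · subst hc2; exact le_refl _
    · -- p > P
      have hDp : D p + VB P ≤ D P := by
        rw [DF p, DF P]
        have hsub : insert P (F.filter (fun x => p ≤ x)) ⊆ F.filter (fun x => P ≤ x) := by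
          intro x hx
          simp only [Finset.mem_insert, Finset.mem_filter] at hx ⊢
          rcases hx with rfl | ⟨h1, h2⟩
          · exact ⟨hPF, le_refl _⟩
          · exact ⟨h1, (hc2.trans_le h2).le⟩
        have hnm : P ∉ F.filter (fun x => p ≤ x) := by
          simp only [Finset.mem_filter, not_and, not_le]
          intro _; exact hc2
        calc ∑ x ∈ F.filter (fun x => p ≤ x), VB x + VB P
            = ∑ x ∈ insert P (F.filter (fun x => p ≤ x)), VB x := by
              rw [Finset.sum_insert hnm]; ring
          _ ≤ ∑ x ∈ F.filter (fun x => P ≤ x), VB x :=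
              Finset.sum_le_sum_of_subset hsub
      refine le_min (le_trans (min_le_right _ _) ?_) (le_trans (min_le_right _ _) ?_) <;> omega
end

section
/- Let S, D : ℝ → ℝ be functions with S non-decreasing and D non-increasing, and let q₁ ≤ q₂ be real numbers. Suppose p₁ is the unique maximizer of p ↦ min(S(p), D(p) + q₁) and p₂ is the unique maximizer of p ↦ min(S(p), D(p) + q₂). Then p₁ ≤ p₂; that is, the auction price resulting from an added buy market order is a non-decreasing function of the order size. -/
/-- If `S` is a non-decreasing supply curve, `D` a non-increasing
demand curve, `q₁ ≤ q₂`, and `p₁` (resp. `p₂`) is the unique maximizer of the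
exchanged volume `p ↦ min (S p) (D p + q₁)` (resp. with `q₂`), then `p₁ ≤ p₂`:
the auction price resulting from an added buy market order is a non-decreasing
function of the order size. -/
theorem auction_price_monotone_in_buy_order_size
    (S D : ℝ → ℝ) (hS : Monotone S) (hD : Antitone D)
    (q₁ q₂ : ℝ) (hq : q₁ ≤ q₂) (p₁ p₂ : ℝ)
    (h₁ : ∀ p : ℝ, p ≠ p₁ → min (S p) (D p + q₁) < min (S p₁) (D p₁ + q₁))
    (h₂ : ∀ p : ℝ, p ≠ p₂ → min (S p) (D p + q₂) < min (S p₂) (D p₂ + q₂)) :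
    p₁ ≤ p₂ := by
  by_contra h
  push_neg at h
  have hSp : S p₂ ≤ S p₁ := hS h.le
  have hDp : D p₁ ≤ D p₂ := hD h.le
  have hne₁ : p₂ ≠ p₁ := ne_of_lt h
  have hne₂ : p₁ ≠ p₂ := (ne_of_lt h).symm
  have A := h₁ p₂ hne₁
  have B := h₂ p₁ hne₂
  -- From A: S p₂ < D p₁ + q₁
  have hA : S p₂ < D p₁ + q₁ := by
    have h1 : min (S p₂) (D p₂ + q₁) < D p₁ + q₁ :=
      lt_of_lt_of_le A (min_le_right _ _)
    have h2 : D p₁ + q₁ ≤ D p₂ + q₁ := by linarith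
    have : min (S p₂) (D p₂ + q₁) = S p₂ := by
      rcases min_cases (S p₂) (D p₂ + q₁) with ⟨he, _⟩ | ⟨he, hle⟩
      · exact he
      · linarith
    linarith [this ▸ h1]
  -- From B: D p₁ + q₂ < S p₂
  have hB : D p₁ + q₂ < S p₂ := by
    have h1 : min (S p₁) (D p₁ + q₂) < S p₂ :=
      lt_of_lt_of_le B (min_le_left _ _)
    have : min (S p₁) (D p₁ + q₂) = D p₁ + q₂ := by
      rcases min_cases (S p₁) (D p₁ + q₂) with ⟨he, hle⟩ | ⟨he, _⟩
      · linarith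
      · exact he
    linarith [this ▸ h1]
  linarith
end
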